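/- Let $a = \sum_j a_j\,dx_j$ be a continuous 1-form on the closed unit disk $D^n \subset \mathbb{R}^n$ ($n > 1$), and define $J(x) = \sum_{j=1}^n x_j \int_0^1 a_j(tx)\,dt$. Then for any $q \ge 1$ and $r > qn$ there is a constant $C < \infty$, independent of $a$, such that $\|J\|_{L^q(D^n)} \le C \|a\|_{L^r(D^n)}$. -/

import Mathlib

open MeasureTheory

section StmtAux
open Metric Set
set_option maxHeartbeats 1000000
variable {n : ℕ}

lemma smul_mem_ball {x : EuclideanSpace ℝ (Fin n)} (hx : x ∈ closedBall (0:EuclideanSpace ℝ (Fin n)) 1)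
    {t : ℝ} (ht : t ∈ Icc (0:ℝ) 1) : t • x ∈ closedBall (0:EuclideanSpace ℝ (Fin n)) 1 := by
  rw [mem_closedBall, dist_zero_right] at *
  rw [norm_smul]
  calc ‖t‖ * ‖x‖ ≤ 1 * 1 := by
        apply mul_le_mul _ hx (norm_nonneg _) zero_le_one
        rw [Real.norm_eq_abs, abs_of_nonneg ht.1]; exact ht.2
    _ = 1 := by ring

lemma aux1 (a : EuclideanSpace ℝ (Fin n) → EuclideanSpace ℝ (Fin n))
    (ha : ContinuousOn a (closedBall 0 1)) {x : EuclideanSpace ℝ (Fin n)}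
    (hx : x ∈ closedBall (0:EuclideanSpace ℝ (Fin n)) 1) :
    |∑ j : Fin n, x j * ∫ t in Icc (0:ℝ) 1, a (t • x) j| ≤ ∫ t in Icc (0:ℝ) 1, ‖a (t • x)‖ := by
  have hc : ContinuousOn (fun t : ℝ => a (t • x)) (Icc 0 1) :=
    ha.comp (Continuous.continuousOn (continuous_id.smul continuous_const)) (fun t ht => smul_mem_ball hx ht)
  have hcj : ∀ j : Fin n, ContinuousOn (fun t : ℝ => a (t • x) j) (Icc 0 1) := fun j =>
    (EuclideanSpace.proj j).continuous.comp_continuousOn hc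
  have hij : ∀ j : Fin n, IntegrableOn (fun t : ℝ => x j * a (t • x) j) (Icc (0:ℝ) 1) volume :=
    fun j => ((hcj j).const_smul (x j)).integrableOn_compact isCompact_Icc
  have h1 : ∑ j : Fin n, x j * ∫ t in Icc (0:ℝ) 1, a (t • x) j
      = ∫ t in Icc (0:ℝ) 1, ∑ j : Fin n, x j * a (t • x) j := by
    rw [integral_finset_sum _ (fun j _ => hij j)]
    simp_rw [integral_const_mul]
  rw [h1]
  have h2 : ∀ t ∈ Icc (0:ℝ) 1, |∑ j : Fin n, x j * a (t • x) j| ≤ ‖a (t • x)‖ := by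
    intro t ht
    have : ∑ j : Fin n, x j * a (t • x) j = inner ℝ x (a (t • x)) := by
      rw [PiLp.inner_apply]; simp [RCLike.inner_apply, mul_comm]
    rw [this]
    calc |(inner ℝ x (a (t • x)) : ℝ)| ≤ ‖x‖ * ‖a (t • x)‖ := abs_real_inner_le_norm _ _
      _ ≤ 1 * ‖a (t • x)‖ := by
          apply mul_le_mul_of_nonneg_right _ (norm_nonneg _)
          rwa [mem_closedBall, dist_zero_right] at hx
      _ = _ := one_mul _
  calc |∫ t in Icc (0:ℝ) 1, ∑ j : Fin n, x j * a (t • x) j|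
      ≤ ∫ t in Icc (0:ℝ) 1, |∑ j : Fin n, x j * a (t • x) j| := by
        simpa [Real.norm_eq_abs] using
          norm_integral_le_integral_norm (μ := volume.restrict (Icc (0:ℝ) 1))
            (f := fun t => ∑ j : Fin n, x j * a (t • x) j)
    _ ≤ ∫ t in Icc (0:ℝ) 1, ‖a (t • x)‖ := by
        have hcs : ContinuousOn (fun t : ℝ => ∑ j : Fin n, x j * a (t • x) j) (Icc 0 1) := by
          apply continuousOn_finset_sum
          intro j _
          exact (hcj j).const_smul (x j)
        exact setIntegral_mono_on (hcs.abs.integrableOn_compact isCompact_Icc)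
          ((hc.norm).integrableOn_compact isCompact_Icc) measurableSet_Icc h2

lemma aux2 (q r : ℝ) (hq0 : 0 < q) (hqr : q < r)
    (a : EuclideanSpace ℝ (Fin n) → EuclideanSpace ℝ (Fin n))
    (ha : ContinuousOn a (closedBall 0 1)) {t : ℝ} (ht : t ∈ Ioc (0:ℝ) 1) :
    ∫ y in closedBall (0:EuclideanSpace ℝ (Fin n)) t, ‖a y‖ ^ q
      ≤ (∫ y in closedBall (0:EuclideanSpace ℝ (Fin n)) t, ‖a y‖ ^ r) ^ (q/r)
        * ((volume (closedBall (0:EuclideanSpace ℝ (Fin n)) t)).toReal) ^ (1 - q/r) := by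
  have hr0 : 0 < r := hq0.trans hqr
  have hfrac0 : 0 < q / r := div_pos hq0 hr0
  have hfrac1 : q / r < 1 := (div_lt_one hr0).mpr hqr
  have hpq : ((q/r)⁻¹).HolderConjugate ((1 - q/r)⁻¹) :=
    Real.HolderConjugate.inv_one_sub_inv hfrac0 hfrac1
  have hsub : closedBall (0:EuclideanSpace ℝ (Fin n)) t ⊆ closedBall (0:EuclideanSpace ℝ (Fin n)) 1 :=
    closedBall_subset_closedBall ht.2
  haveI : IsFiniteMeasure (volume.restrict (closedBall (0:EuclideanSpace ℝ (Fin n)) t)) :=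
    ⟨by rw [Measure.restrict_apply_univ]; exact measure_closedBall_lt_top⟩
  obtain ⟨M, hM⟩ := (isCompact_closedBall (0:EuclideanSpace ℝ (Fin n)) 1).exists_bound_of_continuousOn ha
  have hcf : ContinuousOn (fun y : EuclideanSpace ℝ (Fin n) => ‖a y‖ ^ q) (closedBall 0 1) :=
    ha.norm.rpow_const (fun y _ => Or.inr hq0.le)
  have hmeas : AEStronglyMeasurable (fun y : EuclideanSpace ℝ (Fin n) => ‖a y‖ ^ q)
      (volume.restrict (closedBall (0:EuclideanSpace ℝ (Fin n)) t)) :=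
    (hcf.aestronglyMeasurable measurableSet_closedBall).mono_measure
      (Measure.restrict_mono hsub le_rfl)
  have hmem : MemLp (fun y : EuclideanSpace ℝ (Fin n) => ‖a y‖ ^ q) (ENNReal.ofReal ((q/r)⁻¹))
      (volume.restrict (closedBall (0:EuclideanSpace ℝ (Fin n)) t)) := by
    apply MemLp.of_bound hmeas ((max M 0) ^ q)
    filter_upwards [ae_restrict_mem measurableSet_closedBall] with y hy
    rw [Real.norm_eq_abs, abs_of_nonneg (Real.rpow_nonneg (norm_nonneg _) _)]
    exact Real.rpow_le_rpow (norm_nonneg _) (le_max_of_le_left (hM y (hsub hy))) hq0.le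
  have hmem1 : MemLp (fun _ : EuclideanSpace ℝ (Fin n) => (1:ℝ)) (ENNReal.ofReal ((1 - q/r)⁻¹))
      (volume.restrict (closedBall (0:EuclideanSpace ℝ (Fin n)) t)) := memLp_const 1
  have key := integral_mul_le_Lp_mul_Lq_of_nonneg hpq
    (Filter.Eventually.of_forall fun y => Real.rpow_nonneg (norm_nonneg (a y)) q)
    (Filter.Eventually.of_forall fun _ => zero_le_one) hmem hmem1
  simp only [mul_one, Real.one_rpow] at key
  have e1 : ∀ y : EuclideanSpace ℝ (Fin n), (‖a y‖ ^ q) ^ (q/r)⁻¹ = ‖a y‖ ^ r := by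
    intro y
    rw [← Real.rpow_mul (norm_nonneg _)]
    congr 1
    field_simp
  have e2 : (1:ℝ) / (q/r)⁻¹ = q / r := by rw [one_div, inv_inv]
  have e3 : (1:ℝ) / (1 - q/r)⁻¹ = 1 - q / r := by rw [one_div, inv_inv]
  have e4 : ∫ _ in closedBall (0:EuclideanSpace ℝ (Fin n)) t, (1:ℝ) =
      (volume (closedBall (0:EuclideanSpace ℝ (Fin n)) t)).toReal := by
    simp [setIntegral_const, Measure.real_def]
  simp_rw [e1, e2, e3, e4] at key
  exact key

lemma aux3 (q : ℝ) (a : EuclideanSpace ℝ (Fin n) → EuclideanSpace ℝ (Fin n))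
    {t : ℝ} (ht : t ∈ Ioc (0:ℝ) 1) :
    ∫ x in closedBall (0:EuclideanSpace ℝ (Fin n)) 1, ‖a (t • x)‖ ^ q
      = (t ^ n)⁻¹ * ∫ y in closedBall (0:EuclideanSpace ℝ (Fin n)) t, ‖a y‖ ^ q := by
  set F : EuclideanSpace ℝ (Fin n) → ℝ :=
    (closedBall (0:EuclideanSpace ℝ (Fin n)) t).indicator (fun y => ‖a y‖ ^ q) with hF
  have step1 : ∀ x : EuclideanSpace ℝ (Fin n),
      (closedBall (0:EuclideanSpace ℝ (Fin n)) 1).indicator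
        (fun x => ‖a (t • x)‖ ^ q) x = F (t • x) := by
    intro x
    by_cases hx : x ∈ closedBall (0:EuclideanSpace ℝ (Fin n)) 1
    · rw [indicator_of_mem hx, hF, indicator_of_mem]
      rw [mem_closedBall, dist_zero_right, norm_smul, Real.norm_eq_abs, abs_of_nonneg ht.1.le]
      rw [mem_closedBall, dist_zero_right] at hx
      calc t * ‖x‖ ≤ t * 1 := mul_le_mul_of_nonneg_left hx ht.1.le
        _ = t := mul_one t
    · rw [indicator_of_notMem hx, hF, indicator_of_notMem]
      rw [mem_closedBall, dist_zero_right, norm_smul, Real.norm_eq_abs, abs_of_nonneg ht.1.le]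
      rw [mem_closedBall, dist_zero_right, not_le] at hx
      push_neg
      calc t = t * 1 := (mul_one t).symm
        _ < t * ‖x‖ := by exact mul_lt_mul_of_pos_left hx ht.1
  calc ∫ x in closedBall (0:EuclideanSpace ℝ (Fin n)) 1, ‖a (t • x)‖ ^ q
      = ∫ x, (closedBall (0:EuclideanSpace ℝ (Fin n)) 1).indicator
          (fun x => ‖a (t • x)‖ ^ q) x := (integral_indicator measurableSet_closedBall).symm
    _ = ∫ x, F (t • x) := by simp_rw [step1]
    _ = |((t ^ Module.finrank ℝ (EuclideanSpace ℝ (Fin n)))⁻¹ : ℝ)| • ∫ y, F y :=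
        MeasureTheory.Measure.integral_comp_smul volume F t
    _ = (t ^ n)⁻¹ * ∫ y in closedBall (0:EuclideanSpace ℝ (Fin n)) t, ‖a y‖ ^ q := by
        rw [hF, integral_indicator measurableSet_closedBall, smul_eq_mul]
        congr 1
        rw [finrank_euclideanSpace_fin, abs_of_nonneg (inv_nonneg.mpr (pow_nonneg ht.1.le n))]

lemma smul_mem_ball' {x : EuclideanSpace ℝ (Fin n)} (hx : x ∈ closedBall (0:EuclideanSpace ℝ (Fin n)) 1)
    {t : ℝ} (ht : t ∈ Icc (0:ℝ) 1) : t • x ∈ closedBall (0:EuclideanSpace ℝ (Fin n)) 1 := by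
  rw [mem_closedBall, dist_zero_right] at *
  rw [norm_smul]
  calc ‖t‖ * ‖x‖ ≤ 1 * 1 := by
        apply mul_le_mul _ hx (norm_nonneg _) zero_le_one
        rw [Real.norm_eq_abs, abs_of_nonneg ht.1]; exact ht.2
    _ = 1 := by ring

lemma aux4 (q : ℝ) (hq0 : 0 ≤ q) (a : EuclideanSpace ℝ (Fin n) → EuclideanSpace ℝ (Fin n))
    (ha : ContinuousOn a (closedBall 0 1)) :
    Integrable (fun p : EuclideanSpace ℝ (Fin n) × ℝ => ‖a (p.2 • p.1)‖ ^ q)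
      ((volume.restrict (closedBall (0:EuclideanSpace ℝ (Fin n)) 1)).prod
        (volume.restrict (Icc (0:ℝ) 1))) := by
  rw [Measure.prod_restrict, ← MeasureTheory.Measure.volume_eq_prod]
  apply ContinuousOn.integrableOn_compact
    ((isCompact_closedBall (0:EuclideanSpace ℝ (Fin n)) 1).prod isCompact_Icc)
  have hc : ContinuousOn (fun p : EuclideanSpace ℝ (Fin n) × ℝ => a (p.2 • p.1))
      (closedBall (0:EuclideanSpace ℝ (Fin n)) 1 ×ˢ Icc (0:ℝ) 1) := by
    apply ha.comp (Continuous.continuousOn (continuous_snd.smul continuous_fst))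
    intro p hp
    rw [mem_prod] at hp
    exact smul_mem_ball' hp.1 hp.2
  exact hc.norm.rpow_const (fun p _ => Or.inr hq0)

lemma aux5 (q : ℝ) (hq : 1 ≤ q) (a : EuclideanSpace ℝ (Fin n) → EuclideanSpace ℝ (Fin n))
    (ha : ContinuousOn a (closedBall 0 1)) (M : ℝ)
    (hM : ∀ y ∈ closedBall (0:EuclideanSpace ℝ (Fin n)) 1, ‖a y‖ ≤ M)
    {x : EuclideanSpace ℝ (Fin n)} (hx : x ∈ closedBall (0:EuclideanSpace ℝ (Fin n)) 1) :
    (∫ t in Icc (0:ℝ) 1, ‖a (t • x)‖) ^ q ≤ ∫ t in Icc (0:ℝ) 1, ‖a (t • x)‖ ^ q := by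
  have hq0 : (0:ℝ) < q := lt_of_lt_of_le one_pos hq
  have hc : ContinuousOn (fun t : ℝ => a (t • x)) (Icc 0 1) :=
    ha.comp (Continuous.continuousOn (continuous_id.smul continuous_const))
      (fun t ht => smul_mem_ball' hx ht)
  rcases eq_or_lt_of_le hq with rfl | hq1
  · simp [Real.rpow_one]
  have hpq : q.HolderConjugate (Real.conjExponent q) := Real.HolderConjugate.conjExponent hq1
  haveI : IsFiniteMeasure (volume.restrict (Icc (0:ℝ) 1)) :=
    ⟨by rw [Measure.restrict_apply_univ, Real.volume_Icc]; simp⟩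
  have hmeas : AEStronglyMeasurable (fun t : ℝ => ‖a (t • x)‖)
      (volume.restrict (Icc (0:ℝ) 1)) :=
    hc.norm.aestronglyMeasurable measurableSet_Icc
  have hmem : MemLp (fun t : ℝ => ‖a (t • x)‖) (ENNReal.ofReal q)
      (volume.restrict (Icc (0:ℝ) 1)) := by
    apply MemLp.of_bound hmeas (max M 0)
    filter_upwards [ae_restrict_mem measurableSet_Icc] with t ht
    rw [norm_norm]
    exact le_max_of_le_left (hM _ (smul_mem_ball' hx ht))
  have hmem1 : MemLp (fun _ : ℝ => (1:ℝ)) (ENNReal.ofReal (Real.conjExponent q))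
      (volume.restrict (Icc (0:ℝ) 1)) := memLp_const 1
  have key := integral_mul_le_Lp_mul_Lq_of_nonneg hpq
    (Filter.Eventually.of_forall fun t => norm_nonneg (a (t • x)))
    (Filter.Eventually.of_forall fun _ => zero_le_one) hmem hmem1
  simp only [mul_one, Real.one_rpow] at key
  have e4 : ∫ _ in Icc (0:ℝ) 1, (1:ℝ) = 1 := by
    simp [Real.volume_Icc]
  rw [e4, Real.one_rpow, mul_one] at key
  have hA : 0 ≤ ∫ t in Icc (0:ℝ) 1, ‖a (t • x)‖ ^ q :=
    integral_nonneg (fun t => Real.rpow_nonneg (norm_nonneg _) q)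
  calc (∫ t in Icc (0:ℝ) 1, ‖a (t • x)‖) ^ q
      ≤ ((∫ t in Icc (0:ℝ) 1, ‖a (t • x)‖ ^ q) ^ (1/q)) ^ q :=
        Real.rpow_le_rpow (integral_nonneg fun t => norm_nonneg _) key hq0.le
    _ = ∫ t in Icc (0:ℝ) 1, ‖a (t • x)‖ ^ q := by
        rw [← Real.rpow_mul hA, one_div_mul_cancel hq0.ne', Real.rpow_one]

lemma aux6 {β : ℝ} (hβ : β < 1) :
    IntegrableOn (fun t : ℝ => t ^ (-β)) (Icc (0:ℝ) 1) volume := by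
  rw [integrableOn_Icc_iff_integrableOn_Ioc]
  have := intervalIntegral.intervalIntegrable_rpow' (r := -β) (by linarith) (a := 0) (b := 1)
  rwa [intervalIntegrable_iff_integrableOn_Ioc_of_le zero_le_one] at this

end StmtAux

section StmtMain
open Metric Set
set_option maxHeartbeats 1000000

/-- Lemma 3 of the paper. -/
theorem stmt6 (n : ℕ) (hn : 1 < n) (q r : ℝ) (hq : 1 ≤ q) (hr : q * n < r) :
    ∃ C : ℝ, ∀ a : EuclideanSpace ℝ (Fin n) → EuclideanSpace ℝ (Fin n),
      ContinuousOn a (Metric.closedBall (0 : EuclideanSpace ℝ (Fin n)) 1) →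
      (∫ x in Metric.closedBall (0 : EuclideanSpace ℝ (Fin n)) 1,
          |∑ j : Fin n, x j * ∫ t in Set.Icc (0 : ℝ) 1, a (t • x) j| ^ q) ^ (1 / q)
        ≤ C * (∫ x in Metric.closedBall (0 : EuclideanSpace ℝ (Fin n)) 1,
            ‖a x‖ ^ r) ^ (1 / r) := by
  have hq0 : (0:ℝ) < q := lt_of_lt_of_le one_pos hq
  have hn1 : (1:ℝ) ≤ (n:ℝ) := by exact_mod_cast hn.le
  have hqn : q ≤ q * n := le_mul_of_one_le_right hq0.le hn1
  have hqr : q < r := lt_of_le_of_lt hqn hr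
  have hr0 : (0:ℝ) < r := hq0.trans hqr
  set β : ℝ := (n:ℝ) * q / r with hβdef
  have hβ0 : 0 < β := div_pos (mul_pos (lt_of_lt_of_le one_pos hn1) hq0) hr0
  have hβ1 : β < 1 := by
    rw [hβdef, div_lt_one hr0, mul_comm]; exact hr
  set κ : ℝ := (volume (closedBall (0:EuclideanSpace ℝ (Fin n)) 1)).toReal with hκdef
  have hκ0 : 0 ≤ κ := ENNReal.toReal_nonneg
  set I₀ : ℝ := ∫ t in Icc (0:ℝ) 1, t ^ (-β) with hI₀def
  have hI₀0 : 0 ≤ I₀ := setIntegral_nonneg measurableSet_Icc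
    (fun t ht => Real.rpow_nonneg ht.1 _)
  set K : ℝ := κ ^ (1 - q/r) * I₀ with hKdef
  have hK0 : 0 ≤ K := mul_nonneg (Real.rpow_nonneg hκ0 _) hI₀0
  refine ⟨K ^ (1/q), ?_⟩
  intro a ha
  set R : ℝ := ∫ x in closedBall (0:EuclideanSpace ℝ (Fin n)) 1, ‖a x‖ ^ r with hRdef
  have hR0 : 0 ≤ R := setIntegral_nonneg measurableSet_closedBall
    (fun x _ => Real.rpow_nonneg (norm_nonneg _) _)
  obtain ⟨M, hM⟩ := (isCompact_closedBall (0:EuclideanSpace ℝ (Fin n)) 1).exists_bound_of_continuousOn ha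
  have hprod := aux4 q hq0.le a ha
  have hmarg : Integrable (fun x : EuclideanSpace ℝ (Fin n) =>
      ∫ t in Icc (0:ℝ) 1, ‖a (t • x)‖ ^ q)
      (volume.restrict (closedBall (0:EuclideanSpace ℝ (Fin n)) 1)) :=
    hprod.integral_prod_left
  -- Step 1
  have step1 : (∫ x in closedBall (0:EuclideanSpace ℝ (Fin n)) 1,
      |∑ j : Fin n, x j * ∫ t in Icc (0:ℝ) 1, a (t • x) j| ^ q)
      ≤ ∫ x in closedBall (0:EuclideanSpace ℝ (Fin n)) 1,
          ∫ t in Icc (0:ℝ) 1, ‖a (t • x)‖ ^ q := by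
    apply integral_mono_of_nonneg
    · exact Filter.Eventually.of_forall fun x => Real.rpow_nonneg (abs_nonneg _) _
    · exact hmarg
    · filter_upwards [ae_restrict_mem measurableSet_closedBall] with x hx
      calc |∑ j : Fin n, x j * ∫ t in Icc (0:ℝ) 1, a (t • x) j| ^ q
          ≤ (∫ t in Icc (0:ℝ) 1, ‖a (t • x)‖) ^ q :=
            Real.rpow_le_rpow (abs_nonneg _) (aux1 a ha hx) hq0.le
        _ ≤ ∫ t in Icc (0:ℝ) 1, ‖a (t • x)‖ ^ q := aux5 q hq a ha M hM hx
  -- Step 2 : Fubini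
  have step2 : (∫ x in closedBall (0:EuclideanSpace ℝ (Fin n)) 1,
      ∫ t in Icc (0:ℝ) 1, ‖a (t • x)‖ ^ q)
      = ∫ t in Icc (0:ℝ) 1, ∫ x in closedBall (0:EuclideanSpace ℝ (Fin n)) 1,
          ‖a (t • x)‖ ^ q := integral_integral_swap hprod
  -- Step 3
  have hbound : ∀ t ∈ Ioc (0:ℝ) 1,
      (∫ x in closedBall (0:EuclideanSpace ℝ (Fin n)) 1, ‖a (t • x)‖ ^ q)
        ≤ (R ^ (q/r) * κ ^ (1 - q/r)) * t ^ (-β) := by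
    intro t ht
    have htn : (0:ℝ) < t ^ n := pow_pos ht.1 n
    have hsub : closedBall (0:EuclideanSpace ℝ (Fin n)) t ⊆
        closedBall (0:EuclideanSpace ℝ (Fin n)) 1 := closedBall_subset_closedBall ht.2
    have hmono : (∫ y in closedBall (0:EuclideanSpace ℝ (Fin n)) t, ‖a y‖ ^ r) ≤ R := by
      rw [hRdef]
      apply setIntegral_mono_set
      · exact (ha.norm.rpow_const (fun y _ => Or.inr hr0.le)).integrableOn_compact
          (isCompact_closedBall _ _)
      · exact Filter.Eventually.of_forall fun y => Real.rpow_nonneg (norm_nonneg _) _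
      · exact HasSubset.Subset.eventuallyLE hsub
    have hvol : (volume (closedBall (0:EuclideanSpace ℝ (Fin n)) t)).toReal = t ^ n * κ := by
      rw [hκdef, Measure.addHaar_closedBall' volume (0:EuclideanSpace ℝ (Fin n)) ht.1.le,
        ENNReal.toReal_mul, ENNReal.toReal_ofReal (pow_nonneg ht.1.le _),
        finrank_euclideanSpace_fin]
    calc (∫ x in closedBall (0:EuclideanSpace ℝ (Fin n)) 1, ‖a (t • x)‖ ^ q)
        = (t ^ n)⁻¹ * ∫ y in closedBall (0:EuclideanSpace ℝ (Fin n)) t, ‖a y‖ ^ q :=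
          aux3 q a ht
      _ ≤ (t ^ n)⁻¹ * ((∫ y in closedBall (0:EuclideanSpace ℝ (Fin n)) t, ‖a y‖ ^ r) ^ (q/r)
            * ((volume (closedBall (0:EuclideanSpace ℝ (Fin n)) t)).toReal) ^ (1 - q/r)) := by
          apply mul_le_mul_of_nonneg_left (aux2 q r hq0 hqr a ha ht) (inv_nonneg.mpr htn.le)
      _ ≤ (t ^ n)⁻¹ * (R ^ (q/r) * (t ^ n * κ) ^ (1 - q/r)) := by
          rw [hvol]
          apply mul_le_mul_of_nonneg_left _ (inv_nonneg.mpr htn.le)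
          apply mul_le_mul_of_nonneg_right _ (Real.rpow_nonneg (mul_nonneg htn.le hκ0) _)
          exact Real.rpow_le_rpow (setIntegral_nonneg measurableSet_closedBall
            (fun y _ => Real.rpow_nonneg (norm_nonneg _) _)) hmono (div_nonneg hq0.le hr0.le)
      _ = (R ^ (q/r) * κ ^ (1 - q/r)) * t ^ (-β) := by
          rw [Real.mul_rpow htn.le hκ0]
          have e1 : (t:ℝ) ^ n = t ^ ((n:ℝ)) := (Real.rpow_natCast t n).symm
          rw [e1, ← Real.rpow_neg ht.1.le, ← Real.rpow_mul ht.1.le]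
          rw [show (-β) = -(n:ℝ) + (n:ℝ) * (1 - q/r) by rw [hβdef]; field_simp; ring,
            Real.rpow_add ht.1]
          ring
  have step3 : (∫ t in Icc (0:ℝ) 1, ∫ x in closedBall (0:EuclideanSpace ℝ (Fin n)) 1,
      ‖a (t • x)‖ ^ q) ≤ (R ^ (q/r) * κ ^ (1 - q/r)) * I₀ := by
    have h0 : ∀ᵐ t : ℝ ∂volume, t ≠ 0 := by
      rw [ae_iff]
      simpa [Set.setOf_eq_eq_singleton] using measure_singleton (0:ℝ)
    have hint : Integrable (fun t : ℝ => (R ^ (q/r) * κ ^ (1 - q/r)) * t ^ (-β))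
        (volume.restrict (Icc (0:ℝ) 1)) := (aux6 hβ1).const_mul _
    calc (∫ t in Icc (0:ℝ) 1, ∫ x in closedBall (0:EuclideanSpace ℝ (Fin n)) 1, ‖a (t • x)‖ ^ q)
        ≤ ∫ t in Icc (0:ℝ) 1, (R ^ (q/r) * κ ^ (1 - q/r)) * t ^ (-β) := by
          apply integral_mono_of_nonneg
          · exact Filter.Eventually.of_forall fun t => setIntegral_nonneg
              measurableSet_closedBall (fun x _ => Real.rpow_nonneg (norm_nonneg _) _)
          · exact hint
          · filter_upwards [ae_restrict_mem measurableSet_Icc,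
              Filter.Eventually.filter_mono (ae_mono Measure.restrict_le_self) h0] with t ht htne
            exact hbound t ⟨lt_of_le_of_ne ht.1 (Ne.symm htne), ht.2⟩
      _ = (R ^ (q/r) * κ ^ (1 - q/r)) * I₀ := by rw [hI₀def, integral_const_mul]
  -- assemble
  have main : (∫ x in closedBall (0:EuclideanSpace ℝ (Fin n)) 1,
      |∑ j : Fin n, x j * ∫ t in Icc (0:ℝ) 1, a (t • x) j| ^ q) ≤ R ^ (q/r) * K := by
    calc _ ≤ _ := step1
      _ = _ := step2
      _ ≤ (R ^ (q/r) * κ ^ (1 - q/r)) * I₀ := step3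
      _ = R ^ (q/r) * K := by rw [hKdef]; ring
  calc (∫ x in closedBall (0:EuclideanSpace ℝ (Fin n)) 1,
      |∑ j : Fin n, x j * ∫ t in Icc (0:ℝ) 1, a (t • x) j| ^ q) ^ (1/q)
      ≤ (R ^ (q/r) * K) ^ (1/q) := by
        apply Real.rpow_le_rpow _ main (by positivity)
        exact setIntegral_nonneg measurableSet_closedBall
          (fun x _ => Real.rpow_nonneg (abs_nonneg _) _)
    _ = K ^ (1/q) * R ^ (1/r) := by
        rw [Real.mul_rpow (Real.rpow_nonneg hR0 _) hK0, ← Real.rpow_mul hR0]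
        rw [show (q/r) * (1/q) = 1/r by field_simp]
        ring

end StmtMain
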